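/- Let R be a ring and A = A_1 ⊕ ... ⊕ A_n a finite direct sum of simple R-submodules. If the left annihilators Ann_R(A_1), ..., Ann_R(A_n) are pairwise distinct, then A is a cyclic R-module; in fact A is generated by a_1 + ... + a_n for any choice of nonzero elements a_j ∈ A_j. -/

import Mathlib

theorem stmt2 (R : Type*) [Ring R] (M : Type*) [AddCommGroup M] [Module R M]
    (n : ℕ) (A : Fin n → Submodule R M)
    (hsimple : ∀ j, IsSimpleModule R (A j))
    (hindep : iSupIndep A) (hsup : ⨆ j, A j = ⊤)
    (hann : ∀ i j : Fin n, i ≠ j →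
      Module.annihilator R (A i) ≠ Module.annihilator R (A j)) :
    (∃ a : M, Submodule.span R {a} = ⊤) ∧
    ∀ a : Fin n → M, (∀ j, a j ∈ A j) → (∀ j, a j ≠ 0) →
      Submodule.span R {∑ j, a j} = ⊤ := by
  have hint : DirectSum.IsInternal A :=
    (DirectSum.isInternal_submodule_iff_iSupIndep_and_iSup_eq_top A).mpr ⟨hindep, hsup⟩
  set e := LinearEquiv.ofBijective (DirectSum.coeLinearMap A) hint with he
  -- the projection onto `A j`, as a map `M →ₗ[R] M`
  let p : Fin n → M →ₗ[R] M := fun j =>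
    (A j).subtype ∘ₗ (DirectSum.component R (Fin n) (fun i => A i) j) ∘ₗ e.symm.toLinearMap
  have hp_apply : ∀ j x, p j x = ((e.symm x) j : M) := fun j x => rfl
  have hp_mem : ∀ (j k) (x : M), x ∈ A k → p j x = if j = k then x else 0 := by
    intro j k x hx
    rcases eq_or_ne j k with rfl | hjk
    · rw [if_pos rfl, hp_apply, hint.ofBijective_coeLinearMap_of_mem hx]
    · rw [if_neg hjk, hp_apply, hint.ofBijective_coeLinearMap_of_mem_ne hjk.symm hx,
        Submodule.coe_zero]
  have hp_sum : ∀ x : M, ∑ j, p j x = x := by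
    intro x
    have h1 := congrArg (DirectSum.coeLinearMap A) (DirectSum.sum_univ_of (e.symm x))
    rw [map_sum] at h1
    have h2 : DirectSum.coeLinearMap A (e.symm x) = x := e.apply_symm_apply x
    calc ∑ j, p j x = ∑ j, DirectSum.coeLinearMap A
          (DirectSum.of (fun i => A i) j ((e.symm x) j)) := by
          refine Finset.sum_congr rfl fun j _ => ?_
          rw [hp_apply, DirectSum.coeLinearMap_of]
      _ = x := by rw [h1, h2]
  -- semisimplicity
  haveI hss : IsSemisimpleModule R M := by
    refine IsSemisimpleModule.of_sSup_simples_eq_top ?_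
    refine le_antisymm le_top ?_
    rw [← hsup]
    exact iSup_le fun j => le_sSup (hsimple j)
  -- every atom is contained in some `A j`
  have hatom : ∀ S : Submodule R M, IsAtom S → ∃ j, S ≤ A j := by
    intro S hS
    haveI : IsSimpleModule R S := isSimpleModule_iff_isAtom.mpr hS
    -- the projections restricted to S
    let f : ∀ j, S →ₗ[R] A j := fun j =>
      (DirectSum.component R (Fin n) (fun i => A i) j) ∘ₗ e.symm.toLinearMap ∘ₗ S.subtype
    have hf : ∀ (j) (s : S), ((f j s : M)) = p j (s : M) := fun j s => rfl
    by_cases hex : ∃ j, f j ≠ 0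
    · obtain ⟨j, hj⟩ := hex
      refine ⟨j, fun x hx => ?_⟩
      have hzero : ∀ k, k ≠ j → f k = 0 := by
        intro k hk
        by_contra hfk
        haveI := hsimple j; haveI := hsimple k
        have bj := LinearMap.bijective_of_ne_zero hj
        have bk := LinearMap.bijective_of_ne_zero hfk
        have ej := LinearEquiv.ofBijective _ bj
        have ek := LinearEquiv.ofBijective _ bk
        exact hann k j hk ((ej.symm.trans ek).annihilator_eq).symm
      have hx2 : x = ∑ k, p k x := (hp_sum x).symm
      have hx3 : ∑ k, p k x = p j x := by
        refine Finset.sum_eq_single j (fun k _ hk => ?_) (by simp)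
        rw [← hf k ⟨x, hx⟩, hzero k hk]; simp
      rw [hx2, hx3, hp_apply]
      exact ((e.symm x) j).2
    · exfalso
      push_neg at hex
      apply hS.1
      refine (Submodule.eq_bot_iff S).mpr fun x hx => ?_
      have : x = ∑ k, p k x := (hp_sum x).symm
      rw [this]
      refine Finset.sum_eq_zero fun k _ => ?_
      rw [← hf k ⟨x, hx⟩, hex k]; simp
  have key : ∀ a : Fin n → M, (∀ j, a j ∈ A j) → (∀ j, a j ≠ 0) →
      Submodule.span R {∑ j, a j} = ⊤ := by
    intro a ha hane
    set N := Submodule.span R {∑ j, a j} with hN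
    have haN : (∑ j, a j) ∈ N := Submodule.mem_span_singleton_self _
    have hAjN : ∀ j, A j ≤ N := by
      intro j
      have hpa : p j (∑ k, a k) = a j := by
        rw [map_sum, Finset.sum_eq_single_of_mem j (Finset.mem_univ j)
          (fun k _ hk => by rw [hp_mem j k _ (ha k), if_neg (Ne.symm hk)]),
          hp_mem j j _ (ha j), if_pos rfl]
      -- the image of N under p j lies in N
      have hmapN : Submodule.map (p j) N ≤ N := by
        conv_lhs => rw [← IsSemisimpleModule.sSup_simples_le N, sSup_eq_iSup',
          Submodule.map_iSup]
        refine iSup_le fun m => ?_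
        obtain ⟨hm_simple, hmN⟩ := m.2
        haveI := hm_simple
        obtain ⟨k, hk⟩ := hatom m (isSimpleModule_iff_isAtom.mp hm_simple)
        refine Submodule.map_le_iff_le_comap.mpr fun x hx => ?_
        have := hp_mem j k x (hk hx)
        simp only [Submodule.mem_comap]
        rw [this]
        split
        · exact hmN hx
        · exact N.zero_mem
      -- the image of N under p j is all of A j
      have hmapA : Submodule.map (p j) N ≤ A j := by
        rintro x ⟨y, _, rfl⟩
        rw [hp_apply]
        exact ((e.symm y) j).2
      have hAatom : IsAtom (A j) := isSimpleModule_iff_isAtom.mp (hsimple j)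
      have hne : Submodule.map (p j) N ≠ ⊥ := by
        intro hbot
        apply hane j
        have : a j ∈ Submodule.map (p j) N := ⟨_, haN, hpa⟩
        rw [hbot] at this
        simpa using this
      have : Submodule.map (p j) N = A j :=
        ((hAatom.le_iff.mp hmapA).resolve_left hne)
      rw [← this]
      exact hmapN
    rw [eq_top_iff, ← hsup]
    exact iSup_le hAjN
  refine ⟨?_, key⟩
  have hpick : ∀ j, ∃ x : M, x ∈ A j ∧ x ≠ 0 := by
    intro j
    haveI := hsimple j
    haveI := IsSimpleModule.nontrivial R (A j)
    obtain ⟨x, hx⟩ := exists_ne (0 : A j)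
    exact ⟨x, x.2, by simpa [Submodule.coe_eq_zero] using hx⟩
  choose b hb hbne using hpick
  exact ⟨∑ j, b j, key b hb hbne⟩
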